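/- For every integer n > 0, the sum over all weakly decreasing tuples (λ₁, λ₂, ..., λₙ) of nonnegative integers with λ₁ + λ₂ + ... + λₙ = n of the product C(λ₁,λ₂)·C(λ₂,λ₃)···C(λₙ,0) multiplied by the rational number n/λ₁ equals 2^n − 1. (Note λ₁ ≥ 1 for every such tuple.) -/

import Mathlib

open Finset

/-- Weakly decreasing tuples `(λ₁,…,λₙ)` of nonnegative integers with `λ₁+⋯+λₙ = n`. -/
def partitionTuples (n : ℕ) : Finset (Fin n → ℕ) :=
  (Finset.Nat.antidiagonalTuple n n).filter fun t => ∀ i j : Fin n, i ≤ j → t j ≤ t i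

/-- The product `C(λ₁,λ₂)·C(λ₂,λ₃)⋯C(λₙ,0)` with the convention `λ_{n+1} = 0`. -/
def binomProd (n : ℕ) (t : Fin n → ℕ) : ℕ :=
  ∏ i : Fin n, Nat.choose (t i) (if h : (i : ℕ) + 1 < n then t ⟨(i : ℕ) + 1, h⟩ else 0)

namespace Stmt1Aux

/-- Product of binomials with an extra "previous row" `k` on top. -/
def bp : ∀ {m : ℕ}, ℕ → (Fin m → ℕ) → ℕ
  | 0, _, _ => 1
  | _ + 1, k, t => Nat.choose k (t 0) * bp (t 0) (Fin.tail t)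

/-- Recursively defined count. -/
def G : ℕ → ℕ → ℕ → ℕ
  | 0, _, n => if n = 0 then 1 else 0
  | m + 1, k, n => ∑ p ∈ Finset.HasAntidiagonal.antidiagonal n,
      if p.1 ≤ k then Nat.choose k p.1 * G m p.1 p.2 else 0

/-- head with default 0 -/
def hd (m : ℕ) (t : Fin m → ℕ) : ℕ := if h : 0 < m then t ⟨0, h⟩ else 0

lemma sum_adT_succ {M : Type*} [AddCommMonoid M] (m n : ℕ) (f : (Fin (m + 1) → ℕ) → M) :
    ∑ t ∈ Finset.Nat.antidiagonalTuple (m + 1) n, f t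
      = ∑ p ∈ Finset.HasAntidiagonal.antidiagonal n, ∑ s ∈ Finset.Nat.antidiagonalTuple m p.2,
          f (Fin.cons p.1 s) := by
  rw [Finset.sum_sigma']
  refine Finset.sum_nbij' (fun x => ⟨(x 0, ∑ i, Fin.tail x i), Fin.tail x⟩)
    (fun x => Fin.cons x.1.1 x.2) ?_ ?_ ?_ ?_ ?_
  · intro a ha
    rw [Finset.Nat.mem_antidiagonalTuple] at ha
    refine Finset.mem_sigma.mpr ⟨Finset.HasAntidiagonal.mem_antidiagonal.mpr ?_, Finset.Nat.mem_antidiagonalTuple.mpr rfl⟩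
    rw [← ha, Fin.sum_univ_succ]
    rfl
  · intro a ha
    simp only [Finset.mem_sigma, Finset.Nat.mem_antidiagonalTuple,
      Finset.HasAntidiagonal.mem_antidiagonal] at ha
    rw [Finset.Nat.mem_antidiagonalTuple, Fin.sum_cons, ha.2, ha.1]
  · intro a _
    simp [Fin.cons_self_tail]
  · rintro ⟨⟨j, r⟩, s⟩ ha
    simp only [Finset.mem_sigma, Finset.Nat.mem_antidiagonalTuple,
      Finset.HasAntidiagonal.mem_antidiagonal] at ha
    simp [ha.2]
  · intro a _
    simp [Fin.cons_self_tail]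

lemma bp_cons {m : ℕ} (k j : ℕ) (s : Fin m → ℕ) :
    bp k (Fin.cons j s) = Nat.choose k j * bp j s := by
  simp [bp]

lemma dec_cons {m : ℕ} (j : ℕ) (s : Fin m → ℕ) :
    (∀ i i' : Fin (m + 1), i ≤ i' →
        (Fin.cons j s : Fin (m + 1) → ℕ) i' ≤ (Fin.cons j s : Fin (m + 1) → ℕ) i)
      ↔ (∀ i i' : Fin m, i ≤ i' → s i' ≤ s i) ∧ ∀ i, s i ≤ j := by
  constructor
  · intro h
    refine ⟨fun i i' hii => ?_, fun i => ?_⟩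
    · have := h i.succ i'.succ (Fin.succ_le_succ_iff.mpr hii)
      simpa only [Fin.cons_succ] using this
    · have := h 0 i.succ (Fin.zero_le _)
      simpa only [Fin.cons_succ, Fin.cons_zero] using this
  · rintro ⟨h1, h2⟩ i i' hii
    induction i using Fin.cases with
    | zero =>
      induction i' using Fin.cases with
      | zero => simp
      | succ i' => simpa using h2 i'
    | succ i =>
      induction i' using Fin.cases with
      | zero =>
        exact absurd (Fin.le_zero_iff.mp hii) (Fin.succ_ne_zero i)
      | succ i' =>
        simp only [Fin.cons_succ]
        exact h1 i i' (by simpa [Fin.succ_le_succ_iff] using hii)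

lemma cond_cons {m : ℕ} (k j : ℕ) (s : Fin m → ℕ) :
    ((∀ i i' : Fin (m + 1), i ≤ i' →
        (Fin.cons j s : Fin (m + 1) → ℕ) i' ≤ (Fin.cons j s : Fin (m + 1) → ℕ) i)
        ∧ ∀ i, (Fin.cons j s : Fin (m + 1) → ℕ) i ≤ k)
      ↔ j ≤ k ∧ ((∀ i i' : Fin m, i ≤ i' → s i' ≤ s i) ∧ ∀ i, s i ≤ j) := by
  rw [dec_cons]
  constructor
  · rintro ⟨⟨h1, h2⟩, h3⟩
    exact ⟨by simpa using h3 0, h1, h2⟩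
  · rintro ⟨h0, h1, h2⟩
    refine ⟨⟨h1, h2⟩, fun i => ?_⟩
    induction i using Fin.cases with
    | zero => simpa using h0
    | succ i => simpa using le_trans (h2 i) h0

/-- Lemma A: the filtered sum equals `G`. -/
lemma sum_bp_eq_G (m : ℕ) : ∀ k n : ℕ,
    (∑ t ∈ Finset.Nat.antidiagonalTuple m n,
      if ((∀ i i' : Fin m, i ≤ i' → t i' ≤ t i) ∧ ∀ i, t i ≤ k) then bp k t else 0)
      = G m k n := by
  induction m with
  | zero =>
    intro k n
    rcases n with _ | n
    · rw [Finset.Nat.antidiagonalTuple_zero_zero]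
      simp [G, bp]
    · rw [Finset.Nat.antidiagonalTuple_zero_succ]
      simp [G]
  | succ m ih =>
    intro k n
    rw [sum_adT_succ]
    rw [show G (m + 1) k n = ∑ p ∈ Finset.HasAntidiagonal.antidiagonal n,
        if p.1 ≤ k then Nat.choose k p.1 * G m p.1 p.2 else 0 from rfl]
    refine Finset.sum_congr rfl fun p _ => ?_
    simp_rw [cond_cons, bp_cons, ite_and]
    rw [← ih p.1 p.2, Finset.mul_sum]
    by_cases h : p.1 ≤ k
    · simp only [h, if_true]
      refine Finset.sum_congr rfl fun s _ => ?_
      rw [mul_ite, mul_zero]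
      by_cases h1 : ∀ i i' : Fin m, i ≤ i' → s i' ≤ s i <;>
        by_cases h2 : ∀ i : Fin m, s i ≤ p.1 <;> simp [h1, h2]
    · simp [h]

lemma G_zero (m : ℕ) : ∀ r, G m 0 r = if r = 0 then 1 else 0 := by
  induction m with
  | zero => intro r; rfl
  | succ m ih =>
    intro r
    rw [show G (m + 1) 0 r = ∑ p ∈ Finset.HasAntidiagonal.antidiagonal r,
        if p.1 ≤ 0 then Nat.choose 0 p.1 * G m p.1 p.2 else 0 from rfl]
    rw [Finset.Nat.sum_antidiagonal_eq_sum_range_succ_mk,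
      Finset.sum_eq_single 0 (fun k _ hk => if_neg (by omega))
        (fun h => absurd (Finset.mem_range.mpr (by omega)) h)]
    simp [ih]

lemma G_eq_choose (m : ℕ) : ∀ k s : ℕ, s ≤ m → G m k s = Nat.choose (k + s - 1) s := by
  induction m with
  | zero =>
    intro k s hs
    interval_cases s
    simp [G]
  | succ m ih =>
    intro k s hs
    rcases Nat.eq_zero_or_pos s with rfl | hspos
    · rw [show G (m + 1) k 0 = ∑ p ∈ Finset.HasAntidiagonal.antidiagonal 0,
          if p.1 ≤ k then Nat.choose k p.1 * G m p.1 p.2 else 0 from rfl,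
        Finset.Nat.antidiagonal_zero, Finset.sum_singleton]
      simp [G_zero]
    · have key : Nat.choose (k + s - 1) s
          = ∑ p ∈ Finset.HasAntidiagonal.antidiagonal s, Nat.choose k p.1 * Nat.choose (s - 1) p.2 := by
        rw [show k + s - 1 = k + (s - 1) from by omega, Nat.add_choose_eq]
      rw [key]
      rw [show G (m + 1) k s = ∑ p ∈ Finset.HasAntidiagonal.antidiagonal s,
          if p.1 ≤ k then Nat.choose k p.1 * G m p.1 p.2 else 0 from rfl]
      refine Finset.sum_congr rfl fun p hp => ?_
      have hsum : p.1 + p.2 = s := Finset.HasAntidiagonal.mem_antidiagonal.mp hp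
      by_cases h0 : p.1 = 0
      · have h2 : p.2 = s := by omega
        rw [h0, h2, if_pos (Nat.zero_le k), G_zero,
          Nat.choose_eq_zero_of_lt (by omega : s - 1 < s)]
        simp [if_neg (by omega : ¬ s = 0)]
      · by_cases hk : p.1 ≤ k
        · rw [if_pos hk, ih p.1 p.2 (by omega)]
          congr 2
          omega
        · rw [if_neg hk, Nat.choose_eq_zero_of_lt (by omega), zero_mul]

lemma bp_eq_choose_mul (m : ℕ) : ∀ (k : ℕ) (t : Fin m → ℕ),
    bp k t = Nat.choose k (hd m t) * binomProd m t := by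
  induction m with
  | zero => intro k t; simp [bp, hd, binomProd]
  | succ m ih =>
    intro k t
    have hbp : binomProd (m + 1) t
        = Nat.choose (t 0) (hd m (Fin.tail t)) * binomProd m (Fin.tail t) := by
      rw [binomProd, Fin.prod_univ_succ]
      congr 1
      · congr 1
        by_cases hm : 0 < m
        · rw [dif_pos (by simp only [Fin.val_zero]; omega : ((0 : Fin (m + 1)) : ℕ) + 1 < m + 1),
            hd, dif_pos hm]
          rfl
        · rw [dif_neg (by simp only [Fin.val_zero]; omega :
            ¬ ((0 : Fin (m + 1)) : ℕ) + 1 < m + 1), hd, dif_neg hm]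
      · rw [binomProd]
        refine Finset.prod_congr rfl fun i _ => ?_
        congr 1
        by_cases h : (i : ℕ) + 1 < m
        · rw [dif_pos (by simp only [Fin.val_succ]; omega :
            ((i.succ : Fin (m + 1)) : ℕ) + 1 < m + 1), dif_pos h]
          rfl
        · rw [dif_neg (by simp only [Fin.val_succ]; omega :
            ¬ ((i.succ : Fin (m + 1)) : ℕ) + 1 < m + 1), dif_neg h]
    have hhd : hd (m + 1) t = t 0 := by
      rw [hd, dif_pos (Nat.succ_pos m), Fin.mk_zero]
    rw [show bp k t = Nat.choose k (t 0) * bp (t 0) (Fin.tail t) from rfl,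
      ih (t 0) (Fin.tail t), hhd, hbp]

lemma binomProd_cons (m j : ℕ) (s : Fin m → ℕ) :
    binomProd (m + 1) (Fin.cons j s) = bp j s := by
  have h := bp_eq_choose_mul (m + 1) j (Fin.cons j s)
  have hhd : hd (m + 1) (Fin.cons j s) = j := by
    rw [hd, dif_pos (Nat.succ_pos m)]
    rw [show ((⟨0, Nat.succ_pos m⟩ : Fin (m + 1))) = 0 from Fin.mk_zero]
    exact Fin.cons_zero _ _
  rw [hhd, Nat.choose_self, one_mul] at h
  rw [← h, bp_cons, Nat.choose_self, one_mul]

end Stmt1Aux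

theorem stmt1 (n : ℕ) (hn : 0 < n) :
    ∑ t ∈ partitionTuples n, (binomProd n t : ℚ) * ((n : ℚ) / (t ⟨0, hn⟩ : ℚ))
      = 2 ^ n - 1 := by
  rcases n with _ | m
  · exact absurd hn (lt_irrefl 0)
  rw [partitionTuples, Finset.sum_filter, Stmt1Aux.sum_adT_succ]
  have step : ∀ p ∈ Finset.HasAntidiagonal.antidiagonal (m + 1),
      (∑ s ∈ Finset.Nat.antidiagonalTuple m p.2,
        if (∀ i j : Fin (m + 1), i ≤ j → (Fin.cons p.1 s : Fin (m + 1) → ℕ) j ≤ (Fin.cons p.1 s : Fin (m + 1) → ℕ) i) then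
          (binomProd (m + 1) (Fin.cons p.1 s) : ℚ)
            * (((m + 1 : ℕ) : ℚ) / (((Fin.cons p.1 s : Fin (m + 1) → ℕ) ⟨0, hn⟩ : ℕ) : ℚ)) else 0)
      = if p.1 = 0 then 0 else ((Nat.choose (m + 1) p.1 : ℕ) : ℚ) := by
    intro p hp
    have hsum : p.1 + p.2 = m + 1 := Finset.HasAntidiagonal.mem_antidiagonal.mp hp
    have hzero : ((Fin.cons p.1 (0 : Fin m → ℕ) : Fin (m + 1) → ℕ) ⟨0, hn⟩ : ℕ) = p.1 := by
      rw [show ((⟨0, hn⟩ : Fin (m + 1))) = 0 from Fin.mk_zero]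
      exact Fin.cons_zero _ _
    have hrw : (∑ s ∈ Finset.Nat.antidiagonalTuple m p.2,
        if (∀ i j : Fin (m + 1), i ≤ j → (Fin.cons p.1 s : Fin (m + 1) → ℕ) j ≤ (Fin.cons p.1 s : Fin (m + 1) → ℕ) i) then
          (binomProd (m + 1) (Fin.cons p.1 s) : ℚ)
            * (((m + 1 : ℕ) : ℚ) / (((Fin.cons p.1 s : Fin (m + 1) → ℕ) ⟨0, hn⟩ : ℕ) : ℚ)) else 0)
        = (((m + 1 : ℕ) : ℚ) / (p.1 : ℚ))
          * ((∑ s ∈ Finset.Nat.antidiagonalTuple m p.2,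
            if ((∀ i i' : Fin m, i ≤ i' → s i' ≤ s i) ∧ ∀ i, s i ≤ p.1)
              then Stmt1Aux.bp p.1 s else 0 : ℕ) : ℚ) := by
      rw [Nat.cast_sum, Finset.mul_sum]
      push_cast
      refine Finset.sum_congr rfl fun s _ => ?_
      simp only [Stmt1Aux.dec_cons]
      split_ifs with h
      · rw [Stmt1Aux.binomProd_cons]
        rw [show ((⟨0, hn⟩ : Fin (m + 1))) = 0 from Fin.mk_zero, Fin.cons_zero]
        ring
      · ring
    rw [hrw, Stmt1Aux.sum_bp_eq_G]
    by_cases h0 : p.1 = 0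
    · rw [if_pos h0, h0]
      rw [Stmt1Aux.G_zero, if_neg (by omega : ¬ p.2 = 0)]
      simp
    · rw [if_neg h0, Stmt1Aux.G_eq_choose m p.1 p.2 (by omega)]
      have h1 : p.1 + p.2 - 1 = m := by omega
      have h2 : Nat.choose m p.2 = Nat.choose m (p.1 - 1) := by
        rw [show p.2 = m - (p.1 - 1) from by omega]
        exact Nat.choose_symm (by omega)
      rw [h1, h2]
      have hnat : (m + 1) * Nat.choose m (p.1 - 1) = Nat.choose (m + 1) p.1 * p.1 := by
        have h3 : p.1 - 1 + 1 = p.1 := by omega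
        have := Nat.add_one_mul_choose_eq m (p.1 - 1)
        simpa only [Nat.succ_eq_add_one, h3] using this
      have hq : ((p.1 : ℚ)) ≠ 0 := by exact_mod_cast h0
      field_simp
      rw [mul_comm (p.1 : ℚ)]
      exact_mod_cast hnat
  rw [Finset.sum_congr rfl step, Finset.Nat.sum_antidiagonal_eq_sum_range_succ_mk]
  have hterm : ∀ k, (if (k, m + 1 - k).1 = 0 then (0 : ℚ)
      else ((Nat.choose (m + 1) (k, m + 1 - k).1 : ℕ) : ℚ))
      = ((Nat.choose (m + 1) k : ℕ) : ℚ) - (if k = 0 then 1 else 0) := by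
    intro k
    by_cases h : k = 0 <;> simp [h]
  rw [Finset.sum_congr rfl fun k _ => hterm k, Finset.sum_sub_distrib,
    Finset.sum_ite_eq' _ 0 (fun _ => (1 : ℚ)), if_pos (Finset.mem_range.mpr (by omega))]
  have : (∑ k ∈ Finset.range (m + 1 + 1), ((Nat.choose (m + 1) k : ℕ) : ℚ))
      = ((2 ^ (m + 1) : ℕ) : ℚ) := by
    rw [← Nat.cast_sum, Nat.sum_range_choose]
  rw [this]
  push_cast
  ring
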